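/- The group homomorphism π∞_{+,k} restricted to GL∞_+ (invertible upper triangular bounded operators) is surjective onto GL∞_{+,k}: for every g₀ + g₁S + ⋯ + g_{k−1}S^{k−1} ∈ GL∞_{+,k} (i.e., with g₀ invertible) there exists φ ∈ I∞_{+,k} such that g₀ + g₁S + ⋯ + g_{k−1}S^{k−1} + φ is invertible in L∞_+. -/

import Mathlib

noncomputable section
namespace Stmt11

abbrev K := lp (fun _ : ℕ => ℝ) 2

lemma memℓp_band (a : ℕ → ℝ) (C : ℝ) (hC : ∀ n, |a n| ≤ C) (i : ℕ) (f : K) :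
    Memℓp (fun n => a n * (f : ℕ → ℝ) (n + i)) 2 := by
  apply memℓp_gen
  have hf : Summable fun n : ℕ => ‖(f : ℕ → ℝ) n‖ ^ (2 : ENNReal).toReal :=
    (memℓp_gen_iff (by norm_num)).mp (lp.memℓp f)
  have hfi : Summable fun n : ℕ => ‖(f : ℕ → ℝ) (n + i)‖ ^ (2 : ENNReal).toReal :=
    hf.comp_injective (add_left_injective i)
  refine Summable.of_nonneg_of_le (fun n => by positivity) (fun n => ?_)
    (hfi.mul_left (C ^ (2 : ENNReal).toReal))
  have h0 : (0:ℝ) ≤ C := le_trans (abs_nonneg _) (hC 0)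
  have h1 : ‖a n * (f : ℕ → ℝ) (n + i)‖ = |a n| * ‖(f : ℕ → ℝ) (n+i)‖ := by
    simp [abs_mul, Real.norm_eq_abs]
  rw [h1, Real.mul_rpow (abs_nonneg _) (norm_nonneg _)]
  gcongr
  exact hC n

end Stmt11
namespace Stmt11

def bandL (a : ℕ → ℝ) (C : ℝ) (hC : ∀ n, |a n| ≤ C) (i : ℕ) : K →ₗ[ℝ] K where
  toFun f := ⟨fun n => a n * (f : ℕ → ℝ) (n + i), memℓp_band a C hC i f⟩
  map_add' f g := by
    apply lp.ext
    funext n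
    simp only [lp.coeFn_add, Pi.add_apply]
    exact mul_add _ _ _
  map_smul' c f := by
    apply lp.ext
    funext n
    simp only [lp.coeFn_smul, Pi.smul_apply, RingHom.id_apply, smul_eq_mul]
    ring

lemma bandL_apply (a : ℕ → ℝ) (C : ℝ) (hC : ∀ n, |a n| ≤ C) (i : ℕ) (f : K) (n : ℕ) :
    ((bandL a C hC i f : K) : ℕ → ℝ) n = a n * (f : ℕ → ℝ) (n + i) := rfl

def bandOp (a : ℕ → ℝ) (C : ℝ) (hC : ∀ n, |a n| ≤ C) (i : ℕ) : K →L[ℝ] K := by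
  refine LinearMap.mkContinuous (bandL a C hC i) C (fun f => ?_)
  have h0 : (0:ℝ) ≤ C := le_trans (abs_nonneg _) (hC 0)
  have ht : (0:ℝ) < (2 : ENNReal).toReal := by norm_num
  refine lp.norm_le_of_forall_sum_le ht (by positivity) (fun s => ?_)
  set t := (2 : ENNReal).toReal with htdef
  calc ∑ n ∈ s, ‖((bandL a C hC i f : K) : ℕ → ℝ) n‖ ^ t
      ≤ ∑ n ∈ s, C ^ t * ‖(f : ℕ → ℝ) (n + i)‖ ^ t := by
        refine Finset.sum_le_sum (fun n _ => ?_)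
        rw [bandL_apply]
        have h1 : ‖a n * (f : ℕ → ℝ) (n + i)‖ = |a n| * ‖(f : ℕ → ℝ) (n+i)‖ := by
          simp [abs_mul, Real.norm_eq_abs]
        rw [h1, Real.mul_rpow (abs_nonneg _) (norm_nonneg _)]
        gcongr
        exact hC n
    _ = C ^ t * ∑ m ∈ s.image (· + i), ‖(f : ℕ → ℝ) m‖ ^ t := by
        rw [Finset.sum_image (fun x _ y _ h => add_left_injective i h), Finset.mul_sum]
    _ ≤ C ^ t * (‖f‖ ^ t) := by
        have := lp.sum_rpow_le_norm_rpow ht f (s.image (· + i))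
        have h2 : (0:ℝ) ≤ C ^ t := Real.rpow_nonneg h0 t
        nlinarith [this, h2]
    _ = (C * ‖f‖) ^ t := (Real.mul_rpow h0 (norm_nonneg _)).symm

lemma bandOp_apply (a : ℕ → ℝ) (C : ℝ) (hC : ∀ n, |a n| ≤ C) (i : ℕ) (f : K) (n : ℕ) :
    ((bandOp a C hC i f : K) : ℕ → ℝ) n = a n * (f : ℕ → ℝ) (n + i) := rfl

end Stmt11
namespace Stmt11

def matOp (A : ℕ → ℕ → ℝ) (C : ℝ) (hC : ∀ n c, |A n c| ≤ C) (w : ℕ) : K →L[ℝ] K :=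
  ∑ i ∈ Finset.range w, bandOp (fun n => A n (n + i)) C (fun n => hC n (n + i)) i

lemma matOp_apply (A : ℕ → ℕ → ℝ) (C : ℝ) (hC : ∀ n c, |A n c| ≤ C) (w : ℕ) (f : K) (n : ℕ) :
    ((matOp A C hC w f : K) : ℕ → ℝ) n
      = ∑ i ∈ Finset.range w, A n (n + i) * (f : ℕ → ℝ) (n + i) := by
  simp only [matOp, ContinuousLinearMap.sum_apply, lp.coeFn_sum, Finset.sum_apply]
  exact Finset.sum_congr rfl (fun i _ => bandOp_apply _ _ _ _ _ _)

end Stmt11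
namespace Stmt11

lemma pow_eq_zero_of_dec (k : ℕ) (T : K →L[ℝ] K) (φ : ℕ → ℕ) (hφ : ∀ n, φ n < k)
    (hT : ∀ (f : K) (n : ℕ), ((T f : K) : ℕ → ℝ) n ≠ 0 →
      ∃ m, (f : ℕ → ℝ) m ≠ 0 ∧ φ m + 1 ≤ φ n) :
    T ^ k = 0 := by
  have key : ∀ (t : ℕ) (f : K) (n : ℕ), φ n < t → (((T ^ t) f : K) : ℕ → ℝ) n = 0 := by
    intro t
    induction t with
    | zero => intro f n h; omega
    | succ t ih =>
      intro f n h
      by_contra hne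
      rw [pow_succ', ContinuousLinearMap.mul_apply] at hne
      obtain ⟨m, hm1, hm2⟩ := hT _ n hne
      exact hm1 (ih f m (by omega))
  ext f n
  · exact key k f n (hφ n)
end Stmt11
namespace Stmt11

lemma sub_lt_of_block {k n c : ℕ} (hk : 0 < k) (h1 : n ≤ c) (h2 : c / k = n / k) :
    c - n < k := by
  have e1 := Nat.div_add_mod n k
  have e2 := Nat.div_add_mod c k
  have e3 : k * (c / k) = k * (n / k) := by rw [h2]
  have e4 := Nat.mod_lt n hk
  have e5 := Nat.mod_lt c hk
  omega

lemma cross_facts {k n c : ℕ} (hk : 0 < k) (h1 : c / k = n / k + 1) (h2 : c % k < n % k) :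
    n < c ∧ c - n < k ∧ k * (c / k) ≤ c ∧ n < k * (c / k) ∧ c % k = c - k * (c / k) := by
  have e1 := Nat.div_add_mod n k
  have e2 := Nat.div_add_mod c k
  have e3 : k * (c / k) = k * (n / k) + k := by rw [h1, Nat.mul_succ]
  have e4 := Nat.mod_lt n hk
  have e5 := Nat.mod_lt c hk
  omega

variable (k : ℕ) (hk : 0 < k) (g : Fin k → ℕ → ℝ)

def Dmat (n c : ℕ) : ℝ :=
  if h : n ≤ c ∧ c / k = n / k then g ⟨c - n, sub_lt_of_block hk h.1 h.2⟩ n else 0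

def Nmat (n c : ℕ) : ℝ :=
  if h : n < c ∧ c / k = n / k then
    g ⟨c - n, sub_lt_of_block hk h.1.le h.2⟩ n / g ⟨0, hk⟩ n
  else 0

def Mc (n c : ℕ) : ℝ :=
  if h : c / k = n / k + 1 ∧ c % k < n % k then
    (g ⟨c - n, (cross_facts hk h.1 h.2).2.1⟩ n
      - ∑ s ∈ (Finset.Ico (k * (c / k)) c).attach, Mc n s.1 * Dmat k hk g s.1 c)
      / g ⟨0, hk⟩ c
  else 0
termination_by c
decreasing_by exact (Finset.mem_Ico.mp s.2).2

lemma Mc_def (n c : ℕ) : Mc k hk g n c =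
    if h : c / k = n / k + 1 ∧ c % k < n % k then
      (g ⟨c - n, (cross_facts hk h.1 h.2).2.1⟩ n
        - ∑ s ∈ Finset.Ico (k * (c / k)) c, Mc k hk g n s * Dmat k hk g s c)
        / g ⟨0, hk⟩ c
    else 0 := by
  rw [Mc]
  by_cases h : c / k = n / k + 1 ∧ c % k < n % k
  · rw [dif_pos h, dif_pos h,
      Finset.sum_attach (Finset.Ico (k * (c / k)) c) (fun s => Mc k hk g n s * Dmat k hk g s c)]
  · rw [dif_neg h, dif_neg h]

end Stmt11
namespace Stmt11

variable (k : ℕ) (hk : 0 < k) (g : Fin k → ℕ → ℝ)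

lemma Dmat_lower {n c : ℕ} (h : c < n) : Dmat k hk g n c = 0 :=
  dif_neg (fun hh => absurd hh.1 (not_le.2 h))

lemma Dmat_far {n c : ℕ} (h : n + k ≤ c) : Dmat k hk g n c = 0 := by
  rw [Dmat]
  split
  · rename_i hh
    exact absurd (sub_lt_of_block hk hh.1 hh.2) (by omega)
  · rfl

lemma Dmat_diag (c : ℕ) : Dmat k hk g c c = g ⟨0, hk⟩ c := by
  rw [Dmat, dif_pos ⟨le_refl c, rfl⟩]
  congr 1
  exact Fin.ext (by simp)

lemma Dmat_bound {C : ℝ} (hC : ∀ (i : Fin k) (n : ℕ), |g i n| ≤ C) (n c : ℕ) :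
    |Dmat k hk g n c| ≤ C := by
  rw [Dmat]
  split
  · exact hC _ _
  · simpa using le_trans (abs_nonneg _) (hC ⟨0, hk⟩ 0)

lemma Nmat_bound {C ε : ℝ} (hC : ∀ (i : Fin k) (n : ℕ), |g i n| ≤ C) (hε : 0 < ε)
    (hg0 : ∀ n, ε ≤ |g ⟨0, hk⟩ n|) (n c : ℕ) : |Nmat k hk g n c| ≤ C / ε := by
  have h0C : (0:ℝ) ≤ C := le_trans (abs_nonneg _) (hC ⟨0, hk⟩ 0)
  rw [Nmat]
  split
  · rw [abs_div]
    exact div_le_div₀ h0C (hC _ _) hε (hg0 _)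
  · simpa using div_nonneg h0C hε.le

lemma Mc_zero {n c : ℕ} (h : ¬(c / k = n / k + 1 ∧ c % k < n % k)) : Mc k hk g n c = 0 := by
  rw [Mc_def, dif_neg h]

lemma Mc_spec {ε : ℝ} (hε : 0 < ε) (hg0 : ∀ n, ε ≤ |g ⟨0, hk⟩ n|) {n c : ℕ}
    (h : c / k = n / k + 1 ∧ c % k < n % k) :
    (∑ s ∈ Finset.Ico (k * (c / k)) c, Mc k hk g n s * Dmat k hk g s c)
      + Mc k hk g n c * g ⟨0, hk⟩ c = g ⟨c - n, (cross_facts hk h.1 h.2).2.1⟩ n := by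
  have hne : g ⟨0, hk⟩ c ≠ 0 := by
    intro hh
    have := hg0 c
    rw [hh] at this
    simp at this
    linarith
  have e := Mc_def k hk g n c
  rw [dif_pos h] at e
  rw [e, div_mul_cancel₀ _ hne]
  ring

end Stmt11
namespace Stmt11

variable (k : ℕ) (hk : 0 < k) (g : Fin k → ℕ → ℝ)

lemma Mc_bound {C ε : ℝ} (hC : ∀ (i : Fin k) (n : ℕ), |g i n| ≤ C) (hε : 0 < ε)
    (hg0 : ∀ n, ε ≤ |g ⟨0, hk⟩ n|) (n c : ℕ) :
    |Mc k hk g n c| ≤ (C / ε) * (1 + C / ε) ^ (c % k) := by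
  have h0C : (0:ℝ) ≤ C := le_trans (abs_nonneg _) (hC ⟨0, hk⟩ 0)
  have hx : (0:ℝ) ≤ C / ε := div_nonneg h0C hε.le
  induction c using Nat.strong_induction_on with
  | _ c ih =>
    by_cases h : c / k = n / k + 1 ∧ c % k < n % k
    · obtain ⟨hnc, hck, hBle, hnB, hmod⟩ := cross_facts hk h.1 h.2
      have hmk : c % k < k := Nat.mod_lt c hk
      have e := Mc_def k hk g n c
      rw [dif_pos h] at e
      have hs : ∀ j ∈ Finset.range (c % k),
          |Mc k hk g n (k * (c / k) + j) * Dmat k hk g (k * (c / k) + j) c|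
            ≤ (C / ε) * (1 + C / ε) ^ j * C := by
        intro j hj
        rw [Finset.mem_range] at hj
        have hlt : k * (c / k) + j < c := by omega
        have ihj := ih _ hlt
        have hjmod : (k * (c / k) + j) % k = j := by
          rw [Nat.mul_add_mod]
          exact Nat.mod_eq_of_lt (by omega)
        rw [hjmod] at ihj
        rw [abs_mul]
        exact mul_le_mul ihj (Dmat_bound k hk g hC _ _) (abs_nonneg _) (by positivity)
      have hsum : |∑ s ∈ Finset.Ico (k * (c / k)) c, Mc k hk g n s * Dmat k hk g s c|
          ≤ C * ((1 + C / ε) ^ (c % k) - 1) := by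
        rw [Finset.sum_Ico_eq_sum_range]
        have hcB : c - k * (c / k) = c % k := by omega
        rw [hcB]
        refine le_trans (Finset.abs_sum_le_sum_abs _ _) ?_
        refine le_trans (Finset.sum_le_sum hs) ?_
        have hgeom := geom_sum_mul (1 + C / ε) (c % k)
        have hrw : ∑ j ∈ Finset.range (c % k), (C / ε) * (1 + C / ε) ^ j * C
            = ((∑ i ∈ Finset.range (c % k), (1 + C / ε) ^ i) * (1 + C / ε - 1)) * C := by
          rw [Finset.sum_mul, Finset.sum_mul]
          exact Finset.sum_congr rfl (fun j _ => by ring)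
        rw [hrw, hgeom]
        exact le_of_eq (by ring)
      have hnum : |g ⟨c - n, hck⟩ n
          - ∑ s ∈ Finset.Ico (k * (c / k)) c, Mc k hk g n s * Dmat k hk g s c|
          ≤ C * (1 + C / ε) ^ (c % k) := by
        rw [sub_eq_add_neg]
        refine le_trans (abs_add_le _ _) ?_
        rw [abs_neg]
        have h1 := hC ⟨c - n, hck⟩ n
        have hp : (1:ℝ) ≤ (1 + C / ε) ^ (c % k) := one_le_pow₀ (by linarith)
        nlinarith [hsum, h1]
      rw [e, abs_div]
      refine le_trans (div_le_div₀ (by positivity) hnum hε (hg0 c)) (le_of_eq (by ring))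
    · rw [Mc_zero k hk g h]
      simpa using by positivity
end Stmt11
namespace Stmt11

lemma single_coord (c m : ℕ) :
    ((lp.single 2 c (1:ℝ) : K) : ℕ → ℝ) m = if m = c then 1 else 0 := by
  rw [lp.single_apply]
  by_cases h : m = c
  · subst h; simp
  · simp [h]

variable (k : ℕ) (hk : 0 < k) (g : Fin k → ℕ → ℝ) {C ε : ℝ}
  (hC : ∀ (i : Fin k) (n : ℕ), |g i n| ≤ C) (hε : 0 < ε)
  (hg0 : ∀ n, ε ≤ |g ⟨0, hk⟩ n|)

include hε hg0 in
lemma g0_ne (n : ℕ) : g ⟨0, hk⟩ n ≠ 0 := by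
  intro hh
  have := hg0 n
  rw [hh] at this
  simp at this
  linarith

include hC hε hg0 in
lemma Mc_bound' (n c : ℕ) : |Mc k hk g n c| ≤ (C / ε) * (1 + C / ε) ^ k := by
  have h0C : (0:ℝ) ≤ C := le_trans (abs_nonneg _) (hC ⟨0, hk⟩ 0)
  have hx : (0:ℝ) ≤ C / ε := div_nonneg h0C hε.le
  refine (Mc_bound k hk g hC hε hg0 n c).trans ?_
  have := pow_le_pow_right₀ (by linarith : (1:ℝ) ≤ 1 + C / ε) (Nat.mod_lt c hk).le
  nlinarith

def opDelta : K →L[ℝ] K := bandOp (fun n => g ⟨0, hk⟩ n) C (fun n => hC _ n) 0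

def opDelta' : K →L[ℝ] K :=
  bandOp (fun n => (g ⟨0, hk⟩ n)⁻¹) ε⁻¹
    (fun n => by
      rw [abs_inv]
      exact inv_anti₀ hε (hg0 n)) 0

def opN : K →L[ℝ] K := matOp (Nmat k hk g) (C / ε) (Nmat_bound k hk g hC hε hg0) k

def opM : K →L[ℝ] K :=
  matOp (Mc k hk g) ((C / ε) * (1 + C / ε) ^ k) (Mc_bound' k hk g hC hε hg0) k

end Stmt11
namespace Stmt11

variable (k : ℕ) (hk : 0 < k) (g : Fin k → ℕ → ℝ) {C ε : ℝ}
  (hC : ∀ (i : Fin k) (n : ℕ), |g i n| ≤ C) (hε : 0 < ε)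
  (hg0 : ∀ n, ε ≤ |g ⟨0, hk⟩ n|)

lemma opDelta_apply (f : K) (m : ℕ) :
    ((opDelta k hk g hC f : K) : ℕ → ℝ) m = g ⟨0, hk⟩ m * (f : ℕ → ℝ) (m + 0) :=
  bandOp_apply _ _ _ _ f m

lemma opDelta'_apply (f : K) (m : ℕ) :
    ((opDelta' k hk g hε hg0 f : K) : ℕ → ℝ) m = (g ⟨0, hk⟩ m)⁻¹ * (f : ℕ → ℝ) (m + 0) :=
  bandOp_apply _ _ _ _ f m

lemma opN_apply (f : K) (m : ℕ) :
    ((opN k hk g hC hε hg0 f : K) : ℕ → ℝ) m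
      = ∑ i ∈ Finset.range k, Nmat k hk g m (m + i) * (f : ℕ → ℝ) (m + i) :=
  matOp_apply _ _ _ _ f m

lemma opM_apply (f : K) (m : ℕ) :
    ((opM k hk g hC hε hg0 f : K) : ℕ → ℝ) m
      = ∑ i ∈ Finset.range k, Mc k hk g m (m + i) * (f : ℕ → ℝ) (m + i) :=
  matOp_apply _ _ _ _ f m

include hC hε hg0 in
lemma D_apply (f : K) (m : ℕ) :
    (((opDelta k hk g hC * (1 + opN k hk g hC hε hg0)) f : K) : ℕ → ℝ) m
      = ∑ i ∈ Finset.range k, Dmat k hk g m (m + i) * (f : ℕ → ℝ) (m + i) := by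
  have hterm : ∀ i ∈ Finset.range k,
      Dmat k hk g m (m + i) * (f : ℕ → ℝ) (m + i)
        = (if i = 0 then g ⟨0, hk⟩ m * (f : ℕ → ℝ) m else 0)
          + g ⟨0, hk⟩ m * (Nmat k hk g m (m + i) * (f : ℕ → ℝ) (m + i)) := by
    intro i _
    by_cases hi : i = 0
    · subst hi
      have hN : Nmat k hk g m (m + 0) = 0 := by
        rw [Nmat, dif_neg]
        simp
      rw [hN, Nat.add_zero, Dmat_diag, if_pos rfl]
      ring
    · have hD : Dmat k hk g m (m + i) = g ⟨0, hk⟩ m * Nmat k hk g m (m + i) := by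
        rw [Dmat, Nmat]
        by_cases hsame : (m + i) / k = m / k
        · rw [dif_pos ⟨Nat.le_add_right _ _, hsame⟩, dif_pos ⟨by omega, hsame⟩,
            mul_comm, div_mul_cancel₀ _ (g0_ne k hk g hε hg0 m)]
        · rw [dif_neg (fun hx => hsame hx.2), dif_neg (fun hx => hsame hx.2), mul_zero]
      rw [hD, if_neg hi]
      ring
  rw [ContinuousLinearMap.mul_apply, opDelta_apply, Nat.add_zero, ContinuousLinearMap.add_apply,
    lp.coeFn_add, Pi.add_apply, ContinuousLinearMap.one_apply, opN_apply,
    mul_add, Finset.mul_sum]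
  rw [Finset.sum_congr rfl hterm, Finset.sum_add_distrib,
    Finset.sum_ite_eq' (Finset.range k) 0 (fun _ => g ⟨0, hk⟩ m * (f : ℕ → ℝ) m),
    if_pos (Finset.mem_range.mpr hk)]

include hC hε hg0 in
lemma D_single (c m : ℕ) :
    (((opDelta k hk g hC * (1 + opN k hk g hC hε hg0)) (lp.single 2 c 1) : K) : ℕ → ℝ) m
      = Dmat k hk g m c := by
  rw [D_apply]
  by_cases hc : m ≤ c ∧ c < m + k
  · rw [Finset.sum_eq_single (c - m)]
    · have h1 : m + (c - m) = c := by omega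
      rw [single_coord, h1, if_pos rfl, mul_one]
    · intro i _ hne
      rw [single_coord, if_neg (by omega), mul_zero]
    · intro h
      exact absurd (Finset.mem_range.mpr (by omega)) h
  · rw [Finset.sum_eq_zero, eq_comm]
    · rcases not_and_or.mp hc with h | h
      · exact Dmat_lower k hk g (by omega)
      · exact Dmat_far k hk g (by omega)
    · intro i hi
      rw [Finset.mem_range] at hi
      rw [single_coord, if_neg (by omega), mul_zero]

lemma mod_lt_of_same_block {k n c : ℕ} (hk : 0 < k) (h1 : n < c) (h2 : c / k = n / k) :
    n % k < c % k := by
  have e1 := Nat.div_add_mod n k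
  have e2 := Nat.div_add_mod c k
  have e3 : k * (c / k) = k * (n / k) := by rw [h2]
  omega

include hC hε hg0 in
lemma opN_nilpotent : (opN k hk g hC hε hg0) ^ k = 0 := by
  refine pow_eq_zero_of_dec k _ (fun n => k - 1 - n % k)
    (fun n => show k - 1 - n % k < k by omega) ?_
  intro f n hne
  rw [opN_apply] at hne
  obtain ⟨i, _, hterm⟩ := Finset.exists_ne_zero_of_sum_ne_zero hne
  have h1 : Nmat k hk g n (n + i) ≠ 0 := fun h => hterm (by rw [h, zero_mul])
  have h2 : (f : ℕ → ℝ) (n + i) ≠ 0 := fun h => hterm (by rw [h, mul_zero])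
  have hcond : n < n + i ∧ (n + i) / k = n / k := by
    by_contra hx
    exact h1 (dif_neg hx)
  have hmod := mod_lt_of_same_block hk hcond.1 hcond.2
  have hmk : (n + i) % k < k := Nat.mod_lt _ hk
  refine ⟨n + i, h2, ?_⟩
  show (k - 1 - (n + i) % k) + 1 ≤ k - 1 - n % k
  omega

include hC hε hg0 in
lemma opM_nilpotent : (opM k hk g hC hε hg0) ^ k = 0 := by
  refine pow_eq_zero_of_dec k _ (fun n => n % k)
    (fun n => show n % k < k from Nat.mod_lt _ hk) ?_
  intro f n hne
  rw [opM_apply] at hne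
  obtain ⟨i, _, hterm⟩ := Finset.exists_ne_zero_of_sum_ne_zero hne
  have h1 : Mc k hk g n (n + i) ≠ 0 := fun h => hterm (by rw [h, zero_mul])
  have h2 : (f : ℕ → ℝ) (n + i) ≠ 0 := fun h => hterm (by rw [h, mul_zero])
  have hcond : (n + i) / k = n / k + 1 ∧ (n + i) % k < n % k := by
    by_contra hx
    exact h1 (Mc_zero k hk g hx)
  refine ⟨n + i, h2, ?_⟩
  show (n + i) % k + 1 ≤ n % k
  omega

include hC hε hg0 in
lemma opDelta_isUnit : IsUnit (opDelta k hk g hC) := by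
  refine ⟨⟨opDelta k hk g hC, opDelta' k hk g hε hg0, ?_, ?_⟩, rfl⟩ <;>
  · ext f n
    rw [ContinuousLinearMap.mul_apply]
    simp only [opDelta_apply, opDelta'_apply, Nat.add_zero, ContinuousLinearMap.one_apply]
    field_simp [g0_ne k hk g hε hg0 n]

end Stmt11
namespace Stmt11

lemma block_cases {k n c : ℕ} (hk : 0 < k) (h1 : n ≤ c) (h2 : c < n + k) :
    c / k = n / k ∨ c / k = n / k + 1 := by
  have ha : n / k ≤ c / k := Nat.div_le_div_right h1
  have hb : c / k ≤ (n + k) / k := Nat.div_le_div_right h2.le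
  rw [Nat.add_div_right n hk] at hb
  omega

lemma cross_mod_lt {k n c i : ℕ} (hk : 0 < k) (hi : i < k) (hc : c = n + i)
    (hq : c / k = n / k + 1) : c % k < n % k := by
  have h1 := Nat.div_add_mod n k
  have h2 := Nat.div_add_mod c k
  have h3 : k * (c / k) = k * (n / k) + k := by rw [hq, Nat.mul_succ]
  have h4 := Nat.mod_lt n hk
  have h5 := Nat.mod_lt c hk
  omega

variable (k : ℕ) (hk : 0 < k) (g : Fin k → ℕ → ℝ) {C ε : ℝ}
  (hC : ∀ (i : Fin k) (n : ℕ), |g i n| ≤ C) (hε : 0 < ε)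
  (hg0 : ∀ n, ε ≤ |g ⟨0, hk⟩ n|)

def opX : K →L[ℝ] K :=
  (1 + opM k hk g hC hε hg0) * (opDelta k hk g hC * (1 + opN k hk g hC hε hg0))

include hC hε hg0 in
lemma opX_isUnit : IsUnit (opX k hk g hC hε hg0) := by
  refine IsUnit.mul ?_ (IsUnit.mul (opDelta_isUnit k hk g hC hε hg0) ?_)
  · exact IsNilpotent.isUnit_one_add ⟨k, opM_nilpotent k hk g hC hε hg0⟩
  · exact IsNilpotent.isUnit_one_add ⟨k, opN_nilpotent k hk g hC hε hg0⟩

include hC hε hg0 in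
lemma opX_entry (m c : ℕ) :
    ((opX k hk g hC hε hg0 (lp.single 2 c 1) : K) : ℕ → ℝ) m
      = Dmat k hk g m c
        + ∑ j ∈ Finset.range k, Mc k hk g m (m + j) * Dmat k hk g (m + j) c := by
  rw [opX, ContinuousLinearMap.mul_apply, ContinuousLinearMap.add_apply,
    ContinuousLinearMap.one_apply, lp.coeFn_add, Pi.add_apply, D_single, opM_apply]
  congr 1
  refine Finset.sum_congr rfl (fun j _ => ?_)
  rw [D_single]

include hC hε hg0 in
lemma opX_lower {m c : ℕ} (h : c < m) :
    ((opX k hk g hC hε hg0 (lp.single 2 c 1) : K) : ℕ → ℝ) m = 0 := by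
  rw [opX_entry, Dmat_lower k hk g h, Finset.sum_eq_zero, add_zero]
  intro j _
  rw [Dmat_lower k hk g (by omega), mul_zero]

include hC hε hg0 in
lemma opX_diag (n : ℕ) (i : Fin k) :
    ((opX k hk g hC hε hg0 (lp.single 2 (n + i.1) 1) : K) : ℕ → ℝ) n = g i n := by
  have hik : i.1 < k := i.2
  rw [opX_entry]
  rcases block_cases hk (Nat.le_add_right n i.1) (by omega) with hsame | hcross
  · have hD : Dmat k hk g n (n + i.1) = g i n := by
      rw [Dmat, dif_pos ⟨Nat.le_add_right _ _, hsame⟩]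
      congr 1
      exact Fin.ext (by simp)
    rw [hD, Finset.sum_eq_zero, add_zero]
    intro j _
    by_cases hM : (n + j) / k = n / k + 1 ∧ (n + j) % k < n % k
    · have hD0 : Dmat k hk g (n + j) (n + i.1) = 0 := by
        rw [Dmat, dif_neg]
        rintro ⟨ha, hb⟩
        omega
      rw [hD0, mul_zero]
    · rw [Mc_zero k hk g hM, zero_mul]
  · have hmod : (n + i.1) % k < n % k := cross_mod_lt hk hik rfl hcross
    obtain ⟨hnc, hck, hBle, hnB, hmodeq⟩ := cross_facts hk hcross hmod
    have hD0 : Dmat k hk g n (n + i.1) = 0 := by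
      rw [Dmat, dif_neg]
      rintro ⟨ha, hb⟩
      omega
    rw [hD0, zero_add]
    have hply := Mc_spec k hk g hε hg0 (n := n) (c := n + i.1) ⟨hcross, hmod⟩
    have hrange : ∑ j ∈ Finset.range k, Mc k hk g n (n + j) * Dmat k hk g (n + j) (n + i.1)
        = ∑ s ∈ Finset.Ico n (n + k), Mc k hk g n s * Dmat k hk g s (n + i.1) := by
      rw [Finset.sum_Ico_eq_sum_range, show n + k - n = k from by omega]
    rw [hrange]
    have hsub : Finset.Ico (k * ((n + i.1) / k)) (n + i.1 + 1) ⊆ Finset.Ico n (n + k) := by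
      intro s hs
      rw [Finset.mem_Ico] at hs ⊢
      omega
    rw [← Finset.sum_subset hsub]
    · rw [Finset.sum_Ico_succ_top hBle, Dmat_diag k hk g, hply]
      congr 1
      exact Fin.ext (by simp)
    · intro s hs hs'
      rw [Finset.mem_Ico] at hs
      rw [Finset.mem_Ico, not_and_or] at hs'
      rcases hs' with h | h
      · rw [Mc_zero k hk g, zero_mul]
        rintro ⟨h1', h2'⟩
        have e1 := Nat.div_add_mod s k
        have e2 : k * (s / k) = k * ((n + i.1) / k) := by rw [h1', hcross]
        omega
      · rw [Dmat_lower k hk g (by omega), mul_zero]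

end Stmt11
/-- Surjectivity of `π∞_{+,k} : GL∞_+ → GL∞_{+,k}`: any prescribed bounded first `k`
diagonals `g` with invertible diagonal part `g₀` (bounded below in absolute value) can be
completed, by an element of `I∞_{+,k}`, to an invertible bounded upper triangular operator
on the Hilbert space. -/
theorem stmt11
    {H : Type*} [NormedAddCommGroup H] [InnerProductSpace ℝ H] [CompleteSpace H]
    (e : HilbertBasis ℕ ℝ H)
    (k : ℕ) (hk : 0 < k)
    (g : Fin k → ℕ → ℝ) (hbd : ∀ i, ∃ C, ∀ n, |g i n| ≤ C)
    (ε : ℝ) (hε : 0 < ε) (hg0 : ∀ n, ε ≤ |g ⟨0, hk⟩ n|) :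
    ∃ x : H →L[ℝ] H, IsUnit x ∧
      (∀ m n : ℕ, n < m → (inner ℝ (e m) (x (e n)) : ℝ) = 0) ∧
      (∀ (i : Fin k) (n : ℕ), (inner ℝ (e n) (x (e (n + i.1))) : ℝ) = g i n) := by
  classical
  have hne : Nonempty (Fin k) := ⟨⟨0, hk⟩⟩
  choose Cf hCf using hbd
  obtain ⟨C, hC⟩ : ∃ C, ∀ (i : Fin k) (n : ℕ), |g i n| ≤ C := by
    refine ⟨Finset.univ.sup' Finset.univ_nonempty Cf, fun i n => le_trans (hCf i n) ?_⟩
    exact Finset.le_sup' Cf (Finset.mem_univ i)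
  set y : Stmt11.K →L[ℝ] Stmt11.K := Stmt11.opX k hk g hC hε hg0 with hy
  obtain ⟨u, hu⟩ := Stmt11.opX_isUnit k hk g hC hε hg0
  let cle : H ≃L[ℝ] Stmt11.K := e.repr.toContinuousLinearEquiv
  have hcle : ∀ v : H, cle v = e.repr v := fun v => rfl
  have hcle' : ∀ w : Stmt11.K, cle.symm w = e.repr.symm w := fun w => rfl
  let x : H →L[ℝ] H :=
    ((cle.symm : Stmt11.K →L[ℝ] H).comp y).comp (cle : H →L[ℝ] Stmt11.K)
  let x' : H →L[ℝ] H :=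
    ((cle.symm : Stmt11.K →L[ℝ] H).comp (↑u⁻¹ : Stmt11.K →L[ℝ] Stmt11.K)).comp
      (cle : H →L[ℝ] Stmt11.K)
  have hxapp : ∀ v : H, x v = cle.symm (y (cle v)) := fun v => rfl
  have hunit : IsUnit x := by
    refine ⟨⟨x, x', ?_, ?_⟩, rfl⟩
    · ext v
      have h1 : (↑u * ↑u⁻¹ : Stmt11.K →L[ℝ] Stmt11.K) (cle v) = cle v := by
        rw [u.mul_inv]; rfl
      rw [ContinuousLinearMap.mul_apply] at h1
      show x (x' v) = v
      simp only [x, x', ContinuousLinearMap.comp_apply, ContinuousLinearEquiv.coe_coe]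
      rw [ContinuousLinearEquiv.apply_symm_apply, hy, ← hu, h1,
        ContinuousLinearEquiv.symm_apply_apply]
    · ext v
      have h1 : (↑u⁻¹ * ↑u : Stmt11.K →L[ℝ] Stmt11.K) (cle v) = cle v := by
        rw [u.inv_mul]; rfl
      rw [ContinuousLinearMap.mul_apply] at h1
      show x' (x v) = v
      simp only [x, x', ContinuousLinearMap.comp_apply, ContinuousLinearEquiv.coe_coe]
      rw [ContinuousLinearEquiv.apply_symm_apply, hy, ← hu, h1,
        ContinuousLinearEquiv.symm_apply_apply]
  have hentry : ∀ m c : ℕ, (inner ℝ (e m) (x (e c)) : ℝ)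
      = ((y (lp.single 2 c 1) : Stmt11.K) : ℕ → ℝ) m := by
    intro m c
    rw [← HilbertBasis.repr_apply_apply]
    have h2 : x (e c) = e.repr.symm (y (lp.single 2 c 1)) := by
      rw [hxapp, hcle']
      congr 1
      rw [hcle, e.repr_self]
    rw [h2, LinearIsometryEquiv.apply_symm_apply]
  refine ⟨x, hunit, ?_, ?_⟩
  · intro m n hnm
    rw [hentry]
    exact Stmt11.opX_lower k hk g hC hε hg0 hnm
  · intro i n
    rw [hentry]
    exact Stmt11.opX_diag k hk g hC hε hg0 n i
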